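/- Let o, d, n be positive integers, β > 0, and Y ∈ ℝ^{o×n}. The reduced loss L* : ℝ^{d×n} → ℝ, L*(Φ) = ‖Y − W*(Φ)Φ‖_F² + β‖W*(Φ)‖_F² with W*(Φ) = YΦᵀ(ΦΦᵀ + βI)⁻¹, is differentiable at every Φ, and its derivative at Φ in the direction Ψ ∈ ℝ^{d×n} is given by the trace inner product of Ψ with the matrix 2 W*(Φ)ᵀ (W*(Φ)Φ − Y); that is, DL*(Φ)[Ψ] = tr((2 W*(Φ)ᵀ(W*(Φ)Φ − Y))ᵀ Ψ). -/

import Mathlib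

open Matrix BigOperators

attribute [local instance] Matrix.frobeniusNormedAddCommGroup Matrix.frobeniusNormedSpace

/-- Squared Frobenius norm of a real matrix. -/
noncomputable def sqFrob {m n : ℕ} (A : Matrix (Fin m) (Fin n) ℝ) : ℝ :=
  ∑ i, ∑ j, (A i j) ^ 2

/-- The closed-form ridge solution `W*(Φ) = YΦᵀ(ΦΦᵀ + βI)⁻¹`. -/
noncomputable def Wstar {o d n : ℕ} (β : ℝ) (Y : Matrix (Fin o) (Fin n) ℝ)
    (Φ : Matrix (Fin d) (Fin n) ℝ) : Matrix (Fin o) (Fin d) ℝ :=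
  Y * Φᵀ * (Φ * Φᵀ + β • (1 : Matrix (Fin d) (Fin d) ℝ))⁻¹

/-- The reduced loss `L*(Φ) = ‖Y − W*(Φ)Φ‖_F² + β‖W*(Φ)‖_F²`. -/
noncomputable def Lstar {o d n : ℕ} (β : ℝ) (Y : Matrix (Fin o) (Fin n) ℝ)
    (Φ : Matrix (Fin d) (Fin n) ℝ) : ℝ :=
  sqFrob (Y - Wstar β Y Φ * Φ) + β * sqFrob (Wstar β Y Φ)

section Aux

attribute [local instance] Matrix.frobeniusNormedRing Matrix.frobeniusNormedAlgebra
attribute [-instance] instTopologicalSpaceMatrix Matrix.instUniformSpace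

private lemma isBBM_mul {a b c : ℕ} : IsBoundedBilinearMap ℝ
    (fun p : Matrix (Fin a) (Fin b) ℝ × Matrix (Fin b) (Fin c) ℝ => p.1 * p.2) where
  add_left x₁ x₂ y := Matrix.add_mul x₁ x₂ y
  smul_left c x y := Matrix.smul_mul c x y
  add_right x y₁ y₂ := Matrix.mul_add x y₁ y₂
  smul_right c x y := Matrix.mul_smul x c y
  bound := ⟨1, one_pos, fun x y => by
    simpa using Matrix.frobenius_norm_mul x y⟩

/-- Transpose as a continuous linear map (frobenius norm). -/
private noncomputable def tCLM (a b : ℕ) :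
    Matrix (Fin a) (Fin b) ℝ →L[ℝ] Matrix (Fin b) (Fin a) ℝ :=
  LinearMap.toContinuousLinearMap
    { toFun := fun M => Mᵀ
      map_add' := fun M N => Matrix.transpose_add M N
      map_smul' := fun c M => Matrix.transpose_smul c M }

@[local simp] private lemma tCLM_apply {a b : ℕ} (M : Matrix (Fin a) (Fin b) ℝ) :
    tCLM a b M = Mᵀ := rfl

/-- Product rule for matrix-valued functions. -/
private lemma hasFDeriv_mul {a b c : ℕ} {X : Type*} [NormedAddCommGroup X] [NormedSpace ℝ X]
    {f : X → Matrix (Fin a) (Fin b) ℝ} {g : X → Matrix (Fin b) (Fin c) ℝ}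
    {f' : X →L[ℝ] Matrix (Fin a) (Fin b) ℝ} {g' : X →L[ℝ] Matrix (Fin b) (Fin c) ℝ} {x : X}
    (hf : HasFDerivAt f f' x) (hg : HasFDerivAt g g' x) :
    ∃ F : X →L[ℝ] Matrix (Fin a) (Fin c) ℝ, HasFDerivAt (fun y => f y * g y) F x ∧
      ∀ v, F v = f x * g' v + f' v * g x := by
  have hc := (isBBM_mul.hasFDerivAt (f x, g x)).comp x (HasFDerivAt.prodMk hf hg)
  refine ⟨_, hc, fun v => ?_⟩
  exact IsBoundedBilinearMap.deriv_apply _ _ _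

/-- Entry evaluation as a continuous linear map. -/
private noncomputable def eCLM {a b : ℕ} (i : Fin a) (j : Fin b) :
    Matrix (Fin a) (Fin b) ℝ →L[ℝ] ℝ :=
  LinearMap.toContinuousLinearMap
    { toFun := fun M => M i j
      map_add' := fun _ _ => rfl
      map_smul' := fun _ _ => rfl }

@[local simp] private lemma eCLM_apply {a b : ℕ} (i : Fin a) (j : Fin b)
    (M : Matrix (Fin a) (Fin b) ℝ) : eCLM i j M = M i j := rfl

/-- Derivative of the squared Frobenius norm. -/
private lemma hasFDeriv_sqFrob {a b : ℕ} (M : Matrix (Fin a) (Fin b) ℝ) :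
    ∃ F : Matrix (Fin a) (Fin b) ℝ →L[ℝ] ℝ, HasFDerivAt sqFrob F M ∧
      ∀ H, F H = 2 * trace (Mᵀ * H) := by
  have hsq : ∀ (i : Fin a) (j : Fin b),
      HasFDerivAt (fun A : Matrix (Fin a) (Fin b) ℝ => (A i j) ^ 2)
        (M i j • eCLM i j + M i j • eCLM i j) M := by
    intro i j
    rw [show (fun A : Matrix (Fin a) (Fin b) ℝ => A i j ^ 2) = ⇑(eCLM i j) * ⇑(eCLM i j) from
      funext fun A => by simp [pow_two]]
    exact ((eCLM i j).hasFDerivAt (x := M)).mul ((eCLM i j).hasFDerivAt (x := M))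
  refine ⟨_, HasFDerivAt.fun_sum (fun i _ => HasFDerivAt.fun_sum (fun j _ => hsq i j)), fun H => ?_⟩
  simp only [ContinuousLinearMap.coe_sum', Finset.sum_apply, ContinuousLinearMap.add_apply,
    ContinuousLinearMap.smul_apply, eCLM_apply, smul_eq_mul, Matrix.trace, Matrix.diag,
    Matrix.mul_apply, Matrix.transpose_apply, Finset.mul_sum]
  rw [Finset.sum_comm]
  congr 1; ext j; congr 1; ext i; ring

/-- Key trace identity (envelope-theorem cancellation). -/
private lemma trace_key {o d n : ℕ} (β : ℝ) (Φ Ψ : Matrix (Fin d) (Fin n) ℝ)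
    (E : Matrix (Fin o) (Fin n) ℝ) (W : Matrix (Fin o) (Fin d) ℝ)
    (D : Matrix (Fin o) (Fin d) ℝ)
    (h : Φ * Eᵀ + β • Wᵀ = 0) :
    2 * trace (Eᵀ * (D * Φ + W * Ψ)) + β * (2 * trace (Wᵀ * D)) =
      trace (((2 : ℝ) • (Wᵀ * E))ᵀ * Ψ) := by
  have h1 : trace (Eᵀ * (D * Φ + W * Ψ)) = trace (Eᵀ * D * Φ) + trace (Eᵀ * (W * Ψ)) := by
    rw [Matrix.mul_add, Matrix.trace_add, Matrix.mul_assoc]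
  have h2 : trace (Eᵀ * D * Φ) = trace ((Φ * Eᵀ) * D) := by
    rw [Matrix.trace_mul_comm, Matrix.mul_assoc]
  have h3 : trace ((Φ * Eᵀ) * D) + β * trace (Wᵀ * D) = 0 := by
    have h4 := congrArg Matrix.trace (congrArg (· * D) h)
    simp only [Matrix.add_mul, Matrix.trace_add, Matrix.smul_mul, Matrix.trace_smul,
      smul_eq_mul, Matrix.zero_mul, Matrix.trace_zero] at h4
    exact h4
  have h5 : trace (((2 : ℝ) • (Wᵀ * E))ᵀ * Ψ) = 2 * trace (Eᵀ * (W * Ψ)) := by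
    rw [Matrix.transpose_smul, Matrix.transpose_mul, Matrix.transpose_transpose,
      Matrix.smul_mul, Matrix.trace_smul, smul_eq_mul, Matrix.mul_assoc]
  rw [h1, h2, h5]; linarith

theorem stmt_4' (o d n : ℕ)
    (β : ℝ) (hβ : 0 < β)
    (Y : Matrix (Fin o) (Fin n) ℝ) (Φ : Matrix (Fin d) (Fin n) ℝ) :
    DifferentiableAt ℝ (Lstar β Y) Φ ∧
    ∀ Ψ : Matrix (Fin d) (Fin n) ℝ,
      fderiv ℝ (Lstar β Y) Φ Ψ =
        trace (((2 : ℝ) • ((Wstar β Y Φ)ᵀ * (Wstar β Y Φ * Φ - Y)))ᵀ * Ψ) := by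
  classical
  have hu : IsUnit (Φ * Φᵀ + β • (1 : Matrix (Fin d) (Fin d) ℝ)) := by
    have h1 : (Φ * Φᵀ).PosSemidef := by
      simpa using Matrix.posSemidef_self_mul_conjTranspose Φ
    have h2 : (β • (1 : Matrix (Fin d) (Fin d) ℝ)).PosDef :=
      Matrix.PosDef.one.smul hβ
    exact (Matrix.PosDef.posSemidef_add h1 h2).isUnit
  have hudet : IsUnit (Φ * Φᵀ + β • (1 : Matrix (Fin d) (Fin d) ℝ)).det :=
    (Matrix.isUnit_iff_isUnit_det _).mp hu
  -- derivative of P ↦ Pᵀ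
  have hT : HasFDerivAt (fun P : Matrix (Fin d) (Fin n) ℝ => Pᵀ) (tCLM d n) Φ :=
    (tCLM d n).hasFDerivAt
  -- derivative of P ↦ P Pᵀ + β I
  obtain ⟨F₁, h₁, e₁⟩ := hasFDeriv_mul (hasFDerivAt_id Φ) hT
  have h₁' : HasFDerivAt
      (fun P : Matrix (Fin d) (Fin n) ℝ => P * Pᵀ + β • (1 : Matrix (Fin d) (Fin d) ℝ)) F₁ Φ :=
    h₁.add_const _
  -- derivative of inversion
  have hinv : HasFDerivAt Ring.inverse
      (-(ContinuousLinearMap.mulLeftRight ℝ _ (↑hu.unit⁻¹) ↑hu.unit⁻¹))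
      (Φ * Φᵀ + β • (1 : Matrix (Fin d) (Fin d) ℝ)) := by
    have := hasFDerivAt_ringInverse (𝕜 := ℝ) hu.unit
    rwa [hu.unit_spec] at this
  have hV : HasFDerivAt
      (fun P : Matrix (Fin d) (Fin n) ℝ => (P * Pᵀ + β • (1 : Matrix (Fin d) (Fin d) ℝ))⁻¹)
      ((-(ContinuousLinearMap.mulLeftRight ℝ _ (↑hu.unit⁻¹) ↑hu.unit⁻¹)) ∘L F₁) Φ := by
    have := hinv.comp Φ h₁'
    simpa only [Function.comp_def, ← Matrix.nonsing_inv_eq_ringInverse] using this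
  -- derivative of P ↦ Y Pᵀ
  obtain ⟨F₂, h₂, e₂⟩ := hasFDeriv_mul (hasFDerivAt_const Y Φ) hT
  -- derivative of Wstar
  obtain ⟨F₃, h₃, e₃⟩ := hasFDeriv_mul h₂ hV
  have hW : HasFDerivAt (Wstar β Y) F₃ Φ := h₃
  -- derivative of P ↦ Wstar P * P, then of P ↦ Y - Wstar P * P
  obtain ⟨F₄, h₄, e₄⟩ := hasFDeriv_mul hW (hasFDerivAt_id Φ)
  have hG : HasFDerivAt (fun P => Y - Wstar β Y P * P) (-F₄) Φ := h₄.const_sub Y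
  -- squared frobenius pieces
  obtain ⟨F₅, h₅, e₅⟩ := hasFDeriv_sqFrob (Y - Wstar β Y Φ * Φ)
  obtain ⟨F₆, h₆, e₆⟩ := hasFDeriv_sqFrob (Wstar β Y Φ)
  have hL : HasFDerivAt (Lstar β Y) (F₅ ∘L (-F₄) + β • (F₆ ∘L F₃)) Φ :=
    by
      have := (h₅.comp Φ hG).add ((h₆.comp Φ hW).const_mul β)
      exact this
  refine ⟨hL.differentiableAt, fun Ψ => ?_⟩
  rw [hL.fderiv]
  -- the first-order condition
  have hWA : Wstar β Y Φ * (Φ * Φᵀ + β • (1 : Matrix (Fin d) (Fin d) ℝ)) = Y * Φᵀ := by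
    rw [Wstar, Matrix.mul_assoc, Matrix.nonsing_inv_mul _ hudet, Matrix.mul_one]
  have h0 : (Wstar β Y Φ * Φ - Y) * Φᵀ + β • Wstar β Y Φ = 0 := by
    have hexp : Wstar β Y Φ * (Φ * Φᵀ) + β • Wstar β Y Φ = Y * Φᵀ := by
      rw [← hWA, Matrix.mul_add, Matrix.mul_smul, Matrix.mul_one]
    calc (Wstar β Y Φ * Φ - Y) * Φᵀ + β • Wstar β Y Φ
        = (Wstar β Y Φ * (Φ * Φᵀ) + β • Wstar β Y Φ) - Y * Φᵀ := by
          rw [Matrix.sub_mul, Matrix.mul_assoc]; abel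
      _ = 0 := by rw [hexp, sub_self]
  have hkey : Φ * (Wstar β Y Φ * Φ - Y)ᵀ + β • (Wstar β Y Φ)ᵀ = 0 := by
    have := congrArg Matrix.transpose h0
    simpa [Matrix.transpose_add, Matrix.transpose_mul, Matrix.transpose_smul,
      Matrix.transpose_transpose] using this
  -- evaluate the derivative
  have hflip : ∀ X : Matrix (Fin o) (Fin n) ℝ,
      (Y - Wstar β Y Φ * Φ)ᵀ * (-X) = (Wstar β Y Φ * Φ - Y)ᵀ * X := by
    intro X
    rw [← neg_sub (Wstar β Y Φ * Φ), Matrix.transpose_neg, Matrix.neg_mul, Matrix.mul_neg,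
      neg_neg]
  simp only [ContinuousLinearMap.add_apply, ContinuousLinearMap.comp_apply,
    ContinuousLinearMap.neg_apply, ContinuousLinearMap.smul_apply, smul_eq_mul]
  rw [e₅, e₆, hflip, e₄]
  simp only [ContinuousLinearMap.coe_id', id_eq]
  rw [add_comm (Wstar β Y Φ * Ψ)]
  exact trace_key β Φ Ψ (Wstar β Y Φ * Φ - Y) (Wstar β Y Φ) (F₃ Ψ) hkey

end Aux

theorem stmt_4 (o d n : ℕ) (ho : 0 < o) (hd : 0 < d) (hn : 0 < n)
    (β : ℝ) (hβ : 0 < β)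
    (Y : Matrix (Fin o) (Fin n) ℝ) (Φ : Matrix (Fin d) (Fin n) ℝ) :
    DifferentiableAt ℝ (Lstar β Y) Φ ∧
    ∀ Ψ : Matrix (Fin d) (Fin n) ℝ,
      fderiv ℝ (Lstar β Y) Φ Ψ =
        trace (((2 : ℝ) • ((Wstar β Y Φ)ᵀ * (Wstar β Y Φ * Φ - Y)))ᵀ * Ψ) := by
  exact stmt_4' o d n β hβ Y Φ
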